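/- For α > 0 let g_α(t) = (1 + ∫₀^t min(1, s^{1−α}) ds)^{−1} for t ≥ 0 and f(x) = ∫₀^x g_α(t) dt, and write f_k = f(k) for integers k ≥ 0. Then for every α ≥ 1 there exists a constant C ≥ 1 such that for all integers k ≥ C one has C^{−1}·a_k ≤ f_k ≤ C·a_k, where a_k = log k if α = 1, a_k = k^{α−1} if 1 < α < 2, a_k = k/log k if α = 2, and a_k = k if α > 2. -/

import Mathlib

/-- `g_α(t) = (1 + ∫₀^t min(1, s^{1−α}) ds)⁻¹`. -/
noncomputable def gfun (α : ℝ) (t : ℝ) : ℝ :=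
  (1 + ∫ s in (0 : ℝ)..t, min 1 (s ^ (1 - α)))⁻¹

/-- `f(x) = ∫₀^x g_α(t) dt`. -/
noncomputable def ffun (α : ℝ) (x : ℝ) : ℝ := ∫ t in (0 : ℝ)..x, gfun α t

/-- The comparison sequence `a_k`. -/
noncomputable def aseq (α : ℝ) (k : ℕ) : ℝ :=
  if α = 1 then Real.log k
  else if α < 2 then (k : ℝ) ^ (α - 1)
  else if α = 2 then (k : ℝ) / Real.log k
  else (k : ℝ)

open MeasureTheory intervalIntegral Set

noncomputable def mfun (α s : ℝ) : ℝ := min 1 (s ^ (1 - α))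

lemma mfun_intble {α : ℝ} (hα : 1 ≤ α) {a b : ℝ} (ha : 0 ≤ a) (hab : a ≤ b) :
    IntervalIntegrable (mfun α) volume a b := by
  rw [intervalIntegrable_iff_integrableOn_Ioc_of_le hab]
  apply Measure.integrableOn_of_bounded (M := 1)
  · exact measure_Ioc_lt_top.ne
  · exact (measurable_const.min (by fun_prop)).aestronglyMeasurable
  · refine (ae_restrict_iff' measurableSet_Ioc).2 (Filter.Eventually.of_forall ?_)
    intro s hs
    have hs0 : 0 < s := lt_of_le_of_lt ha hs.1
    have h1 : 0 ≤ s ^ (1 - α) := Real.rpow_nonneg hs0.le _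
    rw [Real.norm_eq_abs, abs_le]
    exact ⟨by simp [mfun]; nlinarith, min_le_left _ _⟩

lemma mfun_eq_one {α : ℝ} (hα : 1 ≤ α) {s : ℝ} (h0 : 0 < s) (h1 : s ≤ 1) :
    mfun α s = 1 :=
  min_eq_left (Real.one_le_rpow_of_pos_of_le_one_of_nonpos h0 h1 (by linarith))

lemma mfun_eq_rpow {α : ℝ} (hα : 1 ≤ α) {s : ℝ} (h1 : 1 ≤ s) :
    mfun α s = s ^ (1 - α) :=
  min_eq_right (Real.rpow_le_one_of_one_le_of_nonpos h1 (by linarith))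

lemma I_eq_low {α : ℝ} (hα : 1 ≤ α) {t : ℝ} (h0 : 0 ≤ t) (h1 : t ≤ 1) :
    (∫ s in (0:ℝ)..t, mfun α s) = t := by
  rw [intervalIntegral.integral_congr_ae (g := fun _ => (1:ℝ))
    (Filter.Eventually.of_forall (fun s hs => ?_))]
  · simp
  · rw [Set.uIoc_of_le h0] at hs
    exact mfun_eq_one hα hs.1 (le_trans hs.2 h1)

lemma I_eq_high {α : ℝ} (hα : 1 ≤ α) {t : ℝ} (h1 : 1 ≤ t) :
    (∫ s in (0:ℝ)..t, mfun α s) = 1 + ∫ s in (1:ℝ)..t, s ^ (1 - α) := by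
  rw [← intervalIntegral.integral_add_adjacent_intervals
      (mfun_intble hα le_rfl zero_le_one) (mfun_intble hα zero_le_one h1),
    I_eq_low hα zero_le_one le_rfl]
  congr 1
  apply intervalIntegral.integral_congr
  intro s hs
  rw [Set.uIcc_of_le h1] at hs
  exact mfun_eq_rpow hα hs.1

lemma gfun_eq {α t : ℝ} : gfun α t = (1 + ∫ s in (0:ℝ)..t, mfun α s)⁻¹ := rfl

lemma I_nonneg {α : ℝ} (hα : 1 ≤ α) {t : ℝ} (h0 : 0 ≤ t) :
    0 ≤ ∫ s in (0:ℝ)..t, mfun α s := by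
  apply intervalIntegral.integral_nonneg h0
  intro u hu
  rcases lt_or_ge 0 u with h | h
  · exact le_min zero_le_one (Real.rpow_nonneg h.le _)
  · have hu0 : u = 0 := le_antisymm h hu.1
    subst hu0
    rcases eq_or_lt_of_le hα with h' | h'
    · simp [mfun, ← h']
    · simp [mfun, Real.zero_rpow (show (1:ℝ) - α ≠ 0 by linarith)]

lemma gfun_le_one {α : ℝ} (hα : 1 ≤ α) {t : ℝ} (h0 : 0 ≤ t) : gfun α t ≤ 1 := by
  rw [gfun_eq]
  have := I_nonneg hα (t := t) h0
  rw [inv_le_one_iff₀]; right; linarith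

lemma gfun_nonneg {α : ℝ} (hα : 1 ≤ α) {t : ℝ} (h0 : 0 ≤ t) : 0 ≤ gfun α t := by
  rw [gfun_eq]
  have := I_nonneg hα (t := t) h0
  positivity

lemma gfun_eq_low {α : ℝ} (hα : 1 ≤ α) {t : ℝ} (h0 : 0 ≤ t) (h1 : t ≤ 1) :
    gfun α t = (1 + t)⁻¹ := by rw [gfun_eq, I_eq_low hα h0 h1]

lemma gfun_eq_high {α : ℝ} (hα : 1 ≤ α) {t : ℝ} (h1 : 1 ≤ t) :
    gfun α t = (2 + ∫ s in (1:ℝ)..t, s ^ (1 - α))⁻¹ := by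
  rw [gfun_eq, I_eq_high hα h1]; ring_nf

lemma gfun_intble {α : ℝ} (hα : 1 ≤ α) {a b : ℝ} (ha : 0 ≤ a) (hab : a ≤ b) :
    IntervalIntegrable (gfun α) volume a b := by
  have hb : 0 ≤ b := ha.trans hab
  have hI : IntegrableOn (mfun α) (Set.uIcc 0 b) volume := by
    rw [Set.uIcc_of_le hb, integrableOn_Icc_iff_integrableOn_Ioc]
    exact (intervalIntegrable_iff_integrableOn_Ioc_of_le hb).1 (mfun_intble hα le_rfl hb)
  have hc : ContinuousOn (fun x => ∫ s in (0:ℝ)..x, mfun α s) (Set.Icc 0 b) := by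
    have := intervalIntegral.continuousOn_primitive_interval hI
    rwa [Set.uIcc_of_le hb] at this
  have hg : ContinuousOn (gfun α) (Set.Icc 0 b) := by
    refine (continuousOn_const.add hc).inv₀ ?_
    intro x hx
    have := I_nonneg hα hx.1
    exact (show (0:ℝ) < 1 + ∫ s in (0:ℝ)..x, mfun α s by linarith).ne'
  refine (hg.mono ?_).intervalIntegrable
  rw [Set.uIcc_of_le hab]
  exact Set.Icc_subset_Icc ha le_rfl

lemma int_one_add_inv {a b : ℝ} (ha : 0 ≤ a) (hab : a ≤ b) :
    ∫ t in a..b, (1 + t)⁻¹ = Real.log ((1 + b) / (1 + a)) := by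
  rw [intervalIntegral.integral_comp_add_left (fun u => u⁻¹) 1]
  exact integral_inv_of_pos (by linarith) (by linarith)

lemma ffun_split {α : ℝ} (hα : 1 ≤ α) {x : ℝ} (hx : 1 ≤ x) :
    ffun α x = Real.log 2 + ∫ t in (1:ℝ)..x, gfun α t := by
  have h1 : (∫ t in (0:ℝ)..1, gfun α t) = Real.log 2 := by
    rw [intervalIntegral.integral_congr (g := fun t => (1+t)⁻¹) ?_]
    · rw [int_one_add_inv le_rfl zero_le_one]; norm_num
    · intro t ht
      rw [Set.uIcc_of_le zero_le_one] at ht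
      exact gfun_eq_low hα ht.1 ht.2
  rw [ffun, ← intervalIntegral.integral_add_adjacent_intervals
    (gfun_intble hα le_rfl zero_le_one) (gfun_intble hα zero_le_one hx), h1]

lemma J_eq {α : ℝ} (hα2 : α ≠ 2) {t : ℝ} (ht : 1 ≤ t) :
    (∫ s in (1:ℝ)..t, s ^ (1-α)) = (t ^ (2-α) - 1)/(2-α) := by
  rw [integral_rpow (Or.inr ⟨fun h => hα2 (by linarith),
    by rw [Set.uIcc_of_le ht]; intro h; exact absurd h.1 (by norm_num)⟩)]
  norm_num
  ring_nf

lemma J_eq_two {t : ℝ} (ht : 1 ≤ t) :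
    (∫ s in (1:ℝ)..t, s ^ (1-(2:ℝ))) = Real.log t := by
  rw [intervalIntegral.integral_congr (g := fun s => s⁻¹)
    (fun s _ => by norm_num [Real.rpow_neg_one s])]
  rw [integral_inv_of_pos one_pos (by linarith)]
  norm_num

lemma gfun_one (t : ℝ) : gfun 1 t = (1 + t)⁻¹ := by
  simp [gfun]

lemma ffun_one {x : ℝ} (hx : 0 ≤ x) : ffun 1 x = Real.log (1 + x) := by
  rw [ffun, intervalIntegral.integral_congr (g := fun t => (1+t)⁻¹)
    (fun t _ => gfun_one t), int_one_add_inv le_rfl hx]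
  norm_num

lemma two_le_log {x : ℝ} (h : 20 ≤ x) : 2 ≤ Real.log x := by
  rw [Real.le_log_iff_exp_le (by linarith)]
  have h1 := Real.exp_one_lt_d9
  have h2 : Real.exp 2 = Real.exp 1 * Real.exp 1 := by rw [← Real.exp_add]; norm_num
  nlinarith [Real.exp_pos 1]

set_option maxHeartbeats 1000000 in
/-- for every `α ≥ 1` there is `C ≥ 1` with
`C⁻¹ a_k ≤ f_k ≤ C a_k` for all integers `k ≥ C`. -/
theorem ffun_asymptotics (α : ℝ) (hα : 1 ≤ α) :
    ∃ C : ℝ, 1 ≤ C ∧ ∀ k : ℕ, C ≤ (k : ℝ) →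
      C⁻¹ * aseq α k ≤ ffun α k ∧ ffun α k ≤ C * aseq α k := by
  rcases eq_or_lt_of_le hα with h1 | h1
  · -- α = 1
    subst h1
    refine ⟨2, one_le_two, fun k hk => ?_⟩
    set K := (k:ℝ) with hKdef
    have hK2 : (2:ℝ) ≤ K := hk
    have hf : ffun 1 K = Real.log (1+K) := ffun_one (by linarith)
    have ha : aseq 1 k = Real.log K := by simp [aseq]; rfl
    have hlog0 : 0 ≤ Real.log K := Real.log_nonneg (by linarith)
    have hup : Real.log (1+K) ≤ 2 * Real.log K := by
      calc Real.log (1+K) ≤ Real.log (K^2) :=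
            Real.log_le_log (by linarith) (by nlinarith)
        _ = 2 * Real.log K := by rw [Real.log_pow]; push_cast; ring
    have hlo : Real.log K ≤ Real.log (1+K) := Real.log_le_log (by linarith) (by linarith)
    rw [hf, ha]
    constructor
    · rw [inv_mul_le_iff₀ (by norm_num : (0:ℝ) < 2)]; linarith
    · exact hup
  · rcases lt_trichotomy α 2 with h2 | h2 | h2
    · -- 1 < α < 2
      have hβ : (0:ℝ) < 2 - α := by linarith
      have ha1 : (0:ℝ) < α - 1 := by linarith
      have hq : (0:ℝ) < 2 + 1/(2-α) := by
        have := one_div_pos.mpr hβ; linarith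
      set d : ℝ := (2 + 1/(2-α))⁻¹ with hd
      have hdpos : 0 < d := inv_pos.mpr hq
      set C := max (max (1 + 1/(α-1)) (2*(α-1)*(2+1/(2-α)))) (max ((2:ℝ) ^ ((α-1)⁻¹)) 2)
        with hCdef
      have hC1 : (1:ℝ) ≤ C := le_trans one_le_two ((le_max_right _ _).trans (le_max_right _ _))
      have hCpos : (0:ℝ) < C := lt_of_lt_of_le one_pos hC1
      refine ⟨C, hC1, fun k hk => ?_⟩
      set K := (k:ℝ) with hKdef
      have hK1 : (1:ℝ) ≤ K := hC1.trans hk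
      set P := K ^ (α-1) with hP
      have hP1 : 1 ≤ P := Real.one_le_rpow hK1 ha1.le
      have hP2 : 2 ≤ P := by
        have h := Real.rpow_le_rpow (Real.rpow_nonneg (by norm_num) _)
          (le_trans ((le_max_left _ _).trans (le_max_right _ _)) hk) ha1.le
        rwa [← Real.rpow_mul (by norm_num : (0:ℝ) ≤ 2), inv_mul_cancel₀ ha1.ne',
          Real.rpow_one] at h
      have haseq : aseq α k = P := by
        rw [aseq, if_neg (by linarith), if_pos h2]
      have hpt : ∀ t ∈ Set.Icc (1:ℝ) K, d * t ^ (α-2) ≤ gfun α t ∧ gfun α t ≤ t ^ (α-2) := by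
        intro t ht
        have ht1 : (1:ℝ) ≤ t := ht.1
        have hu1 : 1 ≤ t ^ (2-α) := Real.one_le_rpow ht1 hβ.le
        have hu0 : (0:ℝ) < t ^ (2-α) := by linarith
        have hgt : gfun α t = (2 + (t ^ (2-α) - 1)/(2-α))⁻¹ := by
          rw [gfun_eq_high hα ht1, J_eq (by linarith) ht1]
        have hta : t ^ (α-2) = (t ^ (2-α))⁻¹ := by
          rw [show α-2 = -(2-α) by ring, Real.rpow_neg (by linarith)]
        set u := t ^ (2-α) with hu
        have hden1 : u ≤ 2 + (u-1)/(2-α) := by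
          have : u - 1 ≤ (u-1)/(2-α) := by rw [le_div_iff₀ hβ]; nlinarith
          linarith
        have hdenpos : (0:ℝ) < 2 + (u-1)/(2-α) := by linarith
        have hden2 : 2 + (u-1)/(2-α) ≤ (2 + 1/(2-α)) * u := by
          have h3 : (u-1)/(2-α) ≤ u/(2-α) := by gcongr; linarith
          rw [show (2+1/(2-α))*u = 2*u + u/(2-α) by ring]
          linarith
        constructor
        · rw [hgt, hta, hd, ← mul_inv]
          exact (inv_le_inv₀ (by positivity) hdenpos).2 hden2
        · rw [hgt, hta]
          exact (inv_le_inv₀ hdenpos hu0).2 hden1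
      have hA : (∫ t in (1:ℝ)..K, t ^ (α-2)) = (P - 1)/(α-1) := by
        rw [integral_rpow (Or.inl (by linarith)), show α-2+1 = α-1 by ring,
          Real.one_rpow, hP]
      have hint : IntervalIntegrable (gfun α) volume 1 K := gfun_intble hα zero_le_one hK1
      have hrint : IntervalIntegrable (fun t : ℝ => t ^ (α-2)) volume 1 K :=
        intervalIntegral.intervalIntegrable_rpow' (by linarith)
      have hup : (∫ t in (1:ℝ)..K, gfun α t) ≤ (P-1)/(α-1) := by
        rw [← hA]
        exact intervalIntegral.integral_mono_on hK1 hint hrint (fun t ht => (hpt t ht).2)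
      have hlo : d * ((P-1)/(α-1)) ≤ ∫ t in (1:ℝ)..K, gfun α t := by
        have h4 := intervalIntegral.integral_mono_on hK1 (hrint.const_mul d) hint
          (fun t ht => (hpt t ht).1)
        rwa [intervalIntegral.integral_const_mul, hA] at h4
      have hsplit := ffun_split hα hK1
      have hlog2 : 0 ≤ Real.log 2 := Real.log_nonneg one_le_two
      have hlog2' : Real.log 2 ≤ 1 := le_trans Real.log_two_lt_d9.le (by norm_num)
      have hPA0 : 0 ≤ (P-1)/(α-1) := div_nonneg (by linarith) ha1.le
      rw [haseq]
      constructor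
      · rw [inv_mul_le_iff₀ hCpos]
        have hf0 : d * ((P-1)/(α-1)) ≤ ffun α K := by rw [hsplit]; linarith
        have hCd : 2*(α-1) ≤ C * d := by
          have h6 : 2*(α-1)*(2+1/(2-α)) ≤ C := (le_max_right _ _).trans (le_max_left _ _)
          have h7 : (2+1/(2-α)) * d = 1 := mul_inv_cancel₀ hq.ne'
          calc 2*(α-1) = 2*(α-1)*((2+1/(2-α))*d) := by rw [h7]; ring
            _ = 2*(α-1)*(2+1/(2-α))*d := by ring
            _ ≤ C*d := mul_le_mul_of_nonneg_right h6 hdpos.le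
        have h8 : (2*(α-1)) * ((P-1)/(α-1)) = 2*(P-1) := by field_simp
        calc P ≤ 2*(P-1) := by linarith
          _ = (2*(α-1)) * ((P-1)/(α-1)) := h8.symm
          _ ≤ (C*d) * ((P-1)/(α-1)) := mul_le_mul_of_nonneg_right hCd hPA0
          _ = C * (d * ((P-1)/(α-1))) := by ring
          _ ≤ C * ffun α K := mul_le_mul_of_nonneg_left hf0 hCpos.le
      · have h8 : 1 + 1/(α-1) ≤ C := (le_max_left _ _).trans (le_max_left _ _)
        have h9 : ffun α K ≤ 1 + (P-1)/(α-1) := by rw [hsplit]; linarith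
        have h10 : (P-1)/(α-1) ≤ P/(α-1) := by gcongr; linarith
        calc ffun α K ≤ 1 + P/(α-1) := by linarith
          _ ≤ (1 + 1/(α-1)) * P := by
              rw [show (1+1/(α-1))*P = P + P/(α-1) by ring]
              linarith
          _ ≤ C * P := mul_le_mul_of_nonneg_right h8 (by positivity)
    · -- α = 2
      subst h2
      refine ⟨20, by norm_num, fun k hk => ?_⟩
      set K := (k:ℝ) with hKdef
      have hK20 : (20:ℝ) ≤ K := hk
      have hK0 : (0:ℝ) ≤ K := by linarith
      have hK1 : (1:ℝ) ≤ K := by linarith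
      set L := Real.log K with hL
      have hL2 : 2 ≤ L := two_le_log hK20
      have hLpos : 0 < L := by linarith
      have hs1 : (1:ℝ) ≤ Real.sqrt K := Real.one_le_sqrt.mpr hK1
      have hs0 : (0:ℝ) < Real.sqrt K := by linarith
      have hsK : Real.sqrt K ≤ K := (Real.sqrt_le_left hK0).mpr (by nlinarith)
      have hsK2 : Real.sqrt K ≤ K/2 := (Real.sqrt_le_left (by linarith)).mpr (by nlinarith)
      have hmul : Real.sqrt K * Real.sqrt K = K := Real.mul_self_sqrt hK0
      have hlogs : Real.log (Real.sqrt K) = L/2 := Real.log_sqrt hK0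
      have hg : ∀ t : ℝ, 1 ≤ t → gfun 2 t = (2 + Real.log t)⁻¹ := by
        intro t ht
        rw [gfun_eq_high hα ht, J_eq_two ht]
      have hsplit := ffun_split hα hK1
      have hsplit2 : (∫ t in (1:ℝ)..K, gfun 2 t) =
          (∫ t in (1:ℝ)..(Real.sqrt K), gfun 2 t) + ∫ t in (Real.sqrt K)..K, gfun 2 t :=
        (intervalIntegral.integral_add_adjacent_intervals
          (gfun_intble hα zero_le_one hs1) (gfun_intble hα (by linarith) hsK)).symm
      have hB1 : (∫ t in (1:ℝ)..(Real.sqrt K), gfun 2 t) ≤ Real.sqrt K - 1 := by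
        have h := intervalIntegral.integral_mono_on hs1
          (gfun_intble hα zero_le_one hs1) intervalIntegrable_const
          (fun t ht => gfun_le_one hα (by linarith [ht.1] : (0:ℝ) ≤ t))
        rwa [intervalIntegral.integral_const, smul_eq_mul, mul_one] at h
      have hB1' : 0 ≤ ∫ t in (1:ℝ)..(Real.sqrt K), gfun 2 t :=
        intervalIntegral.integral_nonneg hs1
          (fun t ht => gfun_nonneg hα (by linarith [ht.1]))
      have hB2 : (∫ t in (Real.sqrt K)..K, gfun 2 t) ≤ (K - Real.sqrt K) * (2 + L/2)⁻¹ := by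
        have h := intervalIntegral.integral_mono_on hsK
          (gfun_intble hα (by linarith) hsK) intervalIntegrable_const
          (f := gfun 2) (g := fun _ => (2 + L/2)⁻¹) ?_
        · rwa [intervalIntegral.integral_const, smul_eq_mul] at h
        · intro t ht
          have ht1 : (1:ℝ) ≤ t := le_trans hs1 ht.1
          rw [hg t ht1]
          apply (inv_le_inv₀ (by linarith [Real.log_nonneg ht1]) (by linarith)).2
          have : L/2 ≤ Real.log t := by
            rw [← hlogs]; exact Real.log_le_log hs0 ht.1
          linarith
      have hB3 : (K - Real.sqrt K) * (2 + L)⁻¹ ≤ ∫ t in (Real.sqrt K)..K, gfun 2 t := by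
        have h := intervalIntegral.integral_mono_on hsK
          intervalIntegrable_const (gfun_intble hα (by linarith) hsK)
          (f := fun _ => (2 + L)⁻¹) (g := gfun 2) ?_
        · rwa [intervalIntegral.integral_const, smul_eq_mul] at h
        · intro t ht
          have ht1 : (1:ℝ) ≤ t := le_trans hs1 ht.1
          rw [hg t ht1]
          apply (inv_le_inv₀ (by linarith) (by linarith [Real.log_nonneg ht1])).2
          have : Real.log t ≤ L := Real.log_le_log (by linarith) ht.2
          linarith
      have haseq : aseq 2 k = K / L := by
        rw [aseq, if_neg (by norm_num), if_neg (by norm_num), if_pos rfl]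
      have hKL0 : 0 ≤ K / L := div_nonneg hK0 hLpos.le
      have hLle : L ≤ 2 * Real.sqrt K := by
        have h := Real.log_le_sub_one_of_pos hs0
        rw [hlogs] at h
        linarith
      have he1 : Real.sqrt K ≤ 2 * (K/L) := by
        rw [show 2*(K/L) = (2*K)/L by ring, le_div_iff₀ hLpos]
        nlinarith
      have he2 : (K - Real.sqrt K) * (2 + L/2)⁻¹ ≤ 2 * (K/L) := by
        have i1 : (2+L/2)⁻¹ ≤ (L/2)⁻¹ := (inv_le_inv₀ (by linarith) (by linarith)).2 (by linarith)
        have i2 : (K - Real.sqrt K) * (2+L/2)⁻¹ ≤ K * (L/2)⁻¹ :=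
          mul_le_mul (by linarith) i1 (inv_nonneg.2 (by linarith)) hK0
        have i3 : K * (L/2)⁻¹ = 2 * (K/L) := by
          field_simp
        linarith
      have he3 : 1 ≤ K/L := by
        rw [le_div_iff₀ hLpos]
        have := Real.log_le_sub_one_of_pos (show (0:ℝ) < K by linarith)
        linarith
      have hlog2 : 0 ≤ Real.log 2 := Real.log_nonneg one_le_two
      have hlog2' : Real.log 2 ≤ 1 := le_trans Real.log_two_lt_d9.le (by norm_num)
      rw [haseq]
      constructor
      · rw [inv_mul_le_iff₀ (by norm_num : (0:ℝ) < 20)]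
        have l1 : (K/2) * (2*L)⁻¹ ≤ (K - Real.sqrt K) * (2+L)⁻¹ :=
          mul_le_mul (by linarith) ((inv_le_inv₀ (by linarith) (by linarith)).2 (by linarith))
            (inv_nonneg.2 (by linarith)) (by linarith)
        have l2 : (K/2) * (2*L)⁻¹ = (K/L)/4 := by
          rw [← div_eq_mul_inv, div_div, div_div]
          congr 1
          ring
        have l3 : (K/L)/4 ≤ ffun 2 K := by
          rw [hsplit, hsplit2]
          have := hB3
          linarith
        have hff0 : 0 ≤ ffun 2 K := le_trans (by linarith) l3
        linarith
      · rw [hsplit, hsplit2]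
        linarith
    · -- α > 2
      have ha2 : (0:ℝ) < α - 2 := by linarith
      set q : ℝ := 2 + 1/(α-2) with hqdef
      have hq : (0:ℝ) < q := by
        have := one_div_pos.mpr ha2
        rw [hqdef]; linarith
      set d : ℝ := q⁻¹ with hd
      have hdpos : 0 < d := inv_pos.mpr hq
      set C := 2*q + 2 with hCdef
      have hC1 : (1:ℝ) ≤ C := by rw [hCdef]; linarith
      have hCpos : (0:ℝ) < C := by linarith
      refine ⟨C, hC1, fun k hk => ?_⟩
      set K := (k:ℝ) with hKdef
      have hK2 : (2:ℝ) ≤ K := le_trans (by rw [hCdef]; linarith) hk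
      have hK1 : (1:ℝ) ≤ K := by linarith
      have hK0 : (0:ℝ) ≤ K := by linarith
      have haseq : aseq α k = K := by
        rw [aseq, if_neg (by linarith), if_neg (by linarith), if_neg (by linarith)]
      have hpt : ∀ t ∈ Set.Icc (1:ℝ) K, d ≤ gfun α t := by
        intro t ht
        have ht1 : (1:ℝ) ≤ t := ht.1
        have hu1 : t ^ (2-α) ≤ 1 := Real.rpow_le_one_of_one_le_of_nonpos ht1 (by linarith)
        have hu0 : (0:ℝ) < t ^ (2-α) := Real.rpow_pos_of_pos (by linarith) _
        have hgt : gfun α t = (2 + (t ^ (2-α) - 1)/(2-α))⁻¹ := by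
          rw [gfun_eq_high hα ht1, J_eq (by linarith) ht1]
        have hrw : (t ^ (2-α) - 1)/(2-α) = (1 - t ^ (2-α))/(α-2) := by
          rw [show (2:ℝ) - α = -(α-2) by ring, div_neg, ← neg_div, neg_sub]
        have hb1 : (1 - t ^ (2-α))/(α-2) ≤ 1/(α-2) := by gcongr; linarith
        have hb0 : 0 ≤ (1 - t ^ (2-α))/(α-2) := div_nonneg (by linarith) ha2.le
        have hb1' : (1 - t ^ (2-α))/(α-2) ≤ 1/(α-2) := hb1
        rw [hgt, hrw, hd]
        refine (inv_le_inv₀ hq (by linarith)).2 ?_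
        rw [hqdef]; linarith
      have hlo : d * (K - 1) ≤ ∫ t in (1:ℝ)..K, gfun α t := by
        have h := intervalIntegral.integral_mono_on hK1
          intervalIntegrable_const (gfun_intble hα zero_le_one hK1)
          (f := fun _ => d) (g := gfun α) hpt
        rwa [intervalIntegral.integral_const, smul_eq_mul, mul_comm] at h
      have hupK : ffun α K ≤ K := by
        have h := intervalIntegral.integral_mono_on hK0
          (gfun_intble hα le_rfl hK0) intervalIntegrable_const
          (f := gfun α) (g := fun _ => (1:ℝ)) (fun t ht => gfun_le_one hα ht.1)
        rw [intervalIntegral.integral_const, smul_eq_mul, mul_one, sub_zero] at h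
        exact h
      have hsplit := ffun_split hα hK1
      have hlog2 : 0 ≤ Real.log 2 := Real.log_nonneg one_le_two
      have hf0 : d * (K-1) ≤ ffun α K := by rw [hsplit]; linarith
      rw [haseq]
      constructor
      · rw [inv_mul_le_iff₀ hCpos]
        have hCd : 2 ≤ C * d := by
          have h7 : q * d = 1 := mul_inv_cancel₀ hq.ne'
          have h8 : C*d = 2*(q*d) + 2*d := by rw [hCdef]; ring
          rw [h8, h7]
          linarith
        calc K ≤ 2*(K-1) := by linarith
          _ ≤ (C*d) * (K-1) := mul_le_mul_of_nonneg_right hCd (by linarith)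
          _ = C * (d * (K-1)) := by ring
          _ ≤ C * ffun α K := mul_le_mul_of_nonneg_left hf0 hCpos.le
      · calc ffun α K ≤ K := hupK
          _ ≤ C * K := le_mul_of_one_le_left hK0 hC1
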